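/- Let n ≥ 1, let Γ : ℝ → M_n(ℝ) be differentiable, let U : ℝ → M_n(ℝ) be differentiable with U'(t) = −Γ(t)U(t) and U(t) invertible for all t, and let G : ℝ × ℝⁿ → ℝⁿ. Let y : ℝ → ℝⁿ be twice differentiable and set x(t) = U(t)·y(t). If x satisfies ẍ(t) + 2Γ(t)ẋ(t) + G(t, x(t)) + Γ'(t)x(t) = 0 for all t, then ÿ(t) = U(t)⁻¹·( Γ(t)² U(t) y(t) − G(t, U(t)y(t)) ) for all t ∈ ℝ. -/

import Mathlib

open Matrix

private lemma hasDerivAt_mulVec_aux {n : ℕ} {A : ℝ → Matrix (Fin n) (Fin n) ℝ}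
    {A' : Matrix (Fin n) (Fin n) ℝ} {v : ℝ → Fin n → ℝ} {v' : Fin n → ℝ} {t : ℝ}
    (hA : ∀ i j, HasDerivAt (fun s => A s i j) (A' i j) t)
    (hv : HasDerivAt v v' t) :
    HasDerivAt (fun s => (A s).mulVec (v s)) (A'.mulVec (v t) + (A t).mulVec v') t := by
  rw [hasDerivAt_pi] at hv ⊢
  intro i
  simp only [Matrix.mulVec, dotProduct, Pi.add_apply]
  have hsum : (∑ j, A' i j * v t j) + ∑ j, A t i j * v' j
      = ∑ j, (A' i j * v t j + A t i j * v' j) := Finset.sum_add_distrib.symm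
  rw [hsum]
  exact HasDerivAt.fun_sum fun j _ => (hA i j).mul (hv j)

/- STATEMENT 10: The time-dependent change of variables x = U(t)y, with U the
fundamental solution of U' + ΓU = 0, eliminates the velocity terms:
if ẍ + 2Γẋ + G(t,x) + Γ'x = 0 then ÿ = U⁻¹(Γ²Uy − G(t,Uy)). -/
theorem elimination_of_velocity_terms
    (n : ℕ) (hn : 1 ≤ n)
    (Γ U : ℝ → Matrix (Fin n) (Fin n) ℝ)
    (hΓdiff : ∀ i j : Fin n, Differentiable ℝ (fun t => Γ t i j))
    (hU : ∀ (t : ℝ) (i j : Fin n),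
      HasDerivAt (fun s => U s i j) ((-(Γ t * U t)) i j) t)
    (hUinv : ∀ t, IsUnit (U t))
    (G : ℝ × (Fin n → ℝ) → (Fin n → ℝ))
    (y : ℝ → (Fin n → ℝ))
    (hy : Differentiable ℝ y) (hy' : Differentiable ℝ (deriv y))
    (x : ℝ → (Fin n → ℝ))
    (hx : ∀ t, x t = (U t).mulVec (y t))
    (heq : ∀ t : ℝ,
      deriv (deriv x) t + (2 : ℝ) • (Γ t).mulVec (deriv x t) + G (t, x t)
        + (Matrix.of fun i j => deriv (fun s => Γ s i j) t).mulVec (x t) = 0) :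
    ∀ t : ℝ,
      deriv (deriv y) t
        = ((U t)⁻¹).mulVec ((Γ t ^ 2).mulVec ((U t).mulVec (y t))
            - G (t, (U t).mulVec (y t))) := by
  intro t
  set Γd : ℝ → Matrix (Fin n) (Fin n) ℝ :=
    fun t => Matrix.of fun i j => deriv (fun s => Γ s i j) t with hΓd
  have hxeq : x = fun s => (U s).mulVec (y s) := funext hx
  -- first derivative of x
  have hx1 : ∀ s : ℝ, HasDerivAt x
      ((-(Γ s * U s)).mulVec (y s) + (U s).mulVec (deriv y s)) s := by
    intro s
    rw [hxeq]
    exact hasDerivAt_mulVec_aux (fun i j => hU s i j) (hy s).hasDerivAt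
  have hderiv_x : deriv x = fun s =>
      (-(Γ s * U s)).mulVec (y s) + (U s).mulVec (deriv y s) :=
    funext fun s => (hx1 s).deriv
  -- derivative of entries of Γ*U
  have hmul : ∀ i j : Fin n, HasDerivAt (fun s => (Γ s * U s) i j)
      ((Γd t * U t + Γ t * (-(Γ t * U t))) i j) t := by
    intro i j
    have h1 : ∀ s : ℝ, (Γ s * U s) i j = ∑ k, Γ s i k * U s k j := by
      intro s; simp [Matrix.mul_apply]
    have hterm : ∀ k ∈ Finset.univ, HasDerivAt (fun s => Γ s i k * U s k j)
        (deriv (fun s => Γ s i k) t * U t k j + Γ t i k * ((-(Γ t * U t)) k j)) t :=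
      fun k _ => ((hΓdiff i k t).hasDerivAt).mul (hU t k j)
    have := HasDerivAt.fun_sum hterm
    simp only [h1]
    convert this using 1
    · rfl
    · rfl
    simp [Matrix.add_apply, Matrix.mul_apply, Finset.sum_add_distrib, hΓd]
  have hAneg : ∀ i j : Fin n, HasDerivAt (fun s => (-(Γ s * U s)) i j)
      ((-(Γd t * U t + Γ t * (-(Γ t * U t)))) i j) t := by
    intro i j
    simpa using (hmul i j).fun_neg
  -- second derivative of x
  have hx2 : HasDerivAt (deriv x)
      ((-(Γd t * U t + Γ t * (-(Γ t * U t)))).mulVec (y t)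
        + (-(Γ t * U t)).mulVec (deriv y t)
        + ((-(Γ t * U t)).mulVec (deriv y t) + (U t).mulVec (deriv (deriv y) t))) t := by
    rw [hderiv_x]
    exact (hasDerivAt_mulVec_aux hAneg (hy t).hasDerivAt).add
      (hasDerivAt_mulVec_aux (fun i j => hU t i j) (hy' t).hasDerivAt)
  have h := heq t
  rw [hx2.deriv, congrFun hderiv_x t, hx t] at h
  simp only [Matrix.neg_mulVec, Matrix.add_mulVec, mul_neg, neg_neg,
    Matrix.mulVec_add, Matrix.mulVec_neg, Matrix.mulVec_mulVec, two_smul] at h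
  have key : (U t).mulVec (deriv (deriv y) t)
      = (Γ t * (Γ t * U t)).mulVec (y t) - G (t, (U t).mulVec (y t)) := by
    linear_combination h
  have hd : IsUnit (U t).det := (Matrix.isUnit_iff_isUnit_det _).mp (hUinv t)
  calc deriv (deriv y) t
      = ((U t)⁻¹ * U t).mulVec (deriv (deriv y) t) := by
        rw [Matrix.nonsing_inv_mul _ hd, Matrix.one_mulVec]
    _ = ((U t)⁻¹).mulVec ((U t).mulVec (deriv (deriv y) t)) :=
        (Matrix.mulVec_mulVec _ _ _).symm
    _ = ((U t)⁻¹).mulVec ((Γ t ^ 2).mulVec ((U t).mulVec (y t))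
          - G (t, (U t).mulVec (y t))) := by
        rw [key, Matrix.mulVec_mulVec, pow_two, Matrix.mul_assoc]
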